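/- Let G be a Garside group, r a natural number, p, q ∈ ℤ^r, and v ∈ [p,q] ⊆ G^r. Then the set {s ∈ S : v^s ∈ [p,q]} is closed under greatest common left divisors (if s, t belong to it, so does s ∧ t). Consequently, for every atom x of G⁺, if the set {s ∈ S : x ≼ s and v^s ∈ [p,q]} is nonempty, then it has a unique ≼-minimal element. -/

import Mathlib

/-- A Garside structure on a group `G`: a submonoid `G⁺` of positive elements
together with a Garside element `Δ`, satisfying the Garside axioms. -/
structure GarsideStructure (G : Type*) [Group G] where
  /-- the monoid `G⁺` of positive elements -/
  pos : Submonoid G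
  /-- the Garside element `Δ` -/
  Δ : G
  delta_mem : Δ ∈ pos
  /-- `G⁺` is Noetherian -/
  noetherian : ∀ a ∈ pos, ∃ n : ℕ, ∀ l : List G,
    (∀ x ∈ l, x ∈ pos ∧ x ≠ 1) → l.prod = a → l.length ≤ n
  /-- any two elements of `G⁺` admit a least common right multiple (w.r.t. `≼`) -/
  lcm_right : ∀ a ∈ pos, ∀ b ∈ pos, ∃ m ∈ pos,
    a⁻¹ * m ∈ pos ∧ b⁻¹ * m ∈ pos ∧
      ∀ c ∈ pos, a⁻¹ * c ∈ pos → b⁻¹ * c ∈ pos → m⁻¹ * c ∈ pos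
  /-- any two elements of `G⁺` admit a least common left multiple (w.r.t. `≽`) -/
  lcm_left : ∀ a ∈ pos, ∀ b ∈ pos, ∃ m ∈ pos,
    m * a⁻¹ ∈ pos ∧ m * b⁻¹ ∈ pos ∧
      ∀ c ∈ pos, c * a⁻¹ ∈ pos → c * b⁻¹ ∈ pos → c * m⁻¹ ∈ pos
  /-- `G` is the group of fractions of `G⁺` -/
  fractions : ∀ g : G, ∃ a ∈ pos, ∃ b ∈ pos, g = a⁻¹ * b
  /-- `Δ` is balanced: its left divisors in `G⁺` coincide with its right divisors -/
  balanced : ∀ s ∈ pos, (s⁻¹ * Δ ∈ pos ↔ Δ * s⁻¹ ∈ pos)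
  /-- the set of simple elements (divisors of `Δ`) is finite -/
  simples_finite : {s : G | s ∈ pos ∧ s⁻¹ * Δ ∈ pos}.Finite
  /-- the simple elements generate `G⁺` -/
  simples_generate : Submonoid.closure {s : G | s ∈ pos ∧ s⁻¹ * Δ ∈ pos} = pos

namespace GarsideStructure

variable {G : Type*} [Group G]

/-- `a ≼ b` : left divisibility. -/
def LeftDvd (Γ : GarsideStructure G) (a b : G) : Prop := a⁻¹ * b ∈ Γ.pos

/-- `b ≽ a` : right divisibility. -/
def RightDvd (Γ : GarsideStructure G) (b a : G) : Prop := b * a⁻¹ ∈ Γ.pos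

/-- a simple element: a divisor of `Δ`. -/
def Simple (Γ : GarsideStructure G) (s : G) : Prop := s ∈ Γ.pos ∧ Γ.LeftDvd s Γ.Δ

/-- an atom of `G⁺`. -/
def Atom (Γ : GarsideStructure G) (a : G) : Prop :=
  a ∈ Γ.pos ∧ a ≠ 1 ∧ ∀ b ∈ Γ.pos, ∀ c ∈ Γ.pos, a = b * c → b = 1 ∨ c = 1

/-- the iterated automorphism `τ^k`, where `τ(x) = Δ⁻¹xΔ`; so `τ^k(x) = Δ^(-k) x Δ^k`. -/
def tau (Γ : GarsideStructure G) (k : ℤ) (x : G) : G := Γ.Δ ^ (-k) * x * Γ.Δ ^ k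

/-- `d` is the greatest common left divisor (`∧`) of `a` and `b`. -/
def IsLeftGcd (Γ : GarsideStructure G) (d a b : G) : Prop :=
  d ∈ Γ.pos ∧ Γ.LeftDvd d a ∧ Γ.LeftDvd d b ∧
    ∀ c ∈ Γ.pos, Γ.LeftDvd c a → Γ.LeftDvd c b → Γ.LeftDvd c d

/-- `d` is the greatest common right divisor (`⋀̃`) of `a` and `b`. -/
def IsRightGcd (Γ : GarsideStructure G) (d a b : G) : Prop :=
  d ∈ Γ.pos ∧ Γ.RightDvd a d ∧ Γ.RightDvd b d ∧
    ∀ c ∈ Γ.pos, Γ.RightDvd a c → Γ.RightDvd b c → Γ.RightDvd d c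

/-- membership of a tuple `a ∈ Gʳ` in the interval `[p,q]`:
`pᵢ ≤ inf aᵢ` (i.e. `Δ^pᵢ ≼ aᵢ`) and `sup aᵢ ≤ qᵢ` (i.e. `aᵢ ≼ Δ^qᵢ`) for all `i`. -/
def InInterval (Γ : GarsideStructure G) {r : ℕ} (p q : Fin r → ℤ) (a : Fin r → G) : Prop :=
  ∀ i, Γ.LeftDvd (Γ.Δ ^ (p i)) (a i) ∧ Γ.LeftDvd (a i) (Γ.Δ ^ (q i))

/-- `‖a‖`: the maximal number of atoms in an expression of `a` as a product of atoms. -/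
noncomputable def anorm (Γ : GarsideStructure G) (a : G) : ℕ :=
  sSup {n | ∃ l : List G, (∀ x ∈ l, Γ.Atom x) ∧ l.prod = a ∧ l.length = n}

end GarsideStructure
namespace GarsideStructure

variable {G : Type*} [Group G] (Γ : GarsideStructure G)

lemma ldvd_refl' (a : G) : Γ.LeftDvd a a := by
  unfold LeftDvd; rw [inv_mul_cancel]; exact Γ.pos.one_mem

lemma ldvd_trans' {a b c : G} (h1 : Γ.LeftDvd a b) (h2 : Γ.LeftDvd b c) : Γ.LeftDvd a c := by
  unfold LeftDvd at *
  have h : a⁻¹ * c = (a⁻¹ * b) * (b⁻¹ * c) := by group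
  rw [h]; exact Γ.pos.mul_mem h1 h2

lemma ldvd_cancel' (c : G) {a b : G} : Γ.LeftDvd (c * a) (c * b) ↔ Γ.LeftDvd a b := by
  unfold LeftDvd
  have h : (c * a)⁻¹ * (c * b) = a⁻¹ * b := by group
  rw [h]

lemma one_ldvd' {a : G} (ha : a ∈ Γ.pos) : Γ.LeftDvd 1 a := by
  unfold LeftDvd; rwa [inv_one, one_mul]

lemma eq_one_of_inv_mem' {a : G} (ha : a ∈ Γ.pos) (hi : a⁻¹ ∈ Γ.pos) : a = 1 := by
  by_contra hne
  obtain ⟨n, hn⟩ := Γ.noetherian a ha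
  have hinv : a⁻¹ ≠ 1 := by simpa using hne
  have hlen := hn (List.replicate n a⁻¹ ++ List.replicate (n + 1) a) ?_ ?_
  · simp only [List.length_append, List.length_replicate] at hlen
    omega
  · intro x hx
    rcases List.mem_append.mp hx with h | h
    · rw [List.eq_of_mem_replicate h]; exact ⟨hi, hinv⟩
    · rw [List.eq_of_mem_replicate h]; exact ⟨ha, hne⟩
  · rw [List.prod_append, List.prod_replicate, List.prod_replicate]
    group

lemma ldvd_antisymm' {a b : G} (h1 : Γ.LeftDvd a b) (h2 : Γ.LeftDvd b a) : a = b := by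
  unfold LeftDvd at h1 h2
  have h3 : (a⁻¹ * b)⁻¹ ∈ Γ.pos := by
    have h : (a⁻¹ * b)⁻¹ = b⁻¹ * a := by group
    rw [h]; exact h2
  have h4 := Γ.eq_one_of_inv_mem' h1 h3
  have h5 : a * (a⁻¹ * b) = a * 1 := by rw [h4]
  have h6 : b = a := by simpa using h5
  exact h6.symm

/-- Existence of the greatest common left divisor in `G⁺` of a nonempty family of
positive elements, with the universal property over positive common divisors. -/
lemma exists_gcd_pos' (C : Set G) (hC : C ⊆ (Γ.pos : Set G)) {s₀ : G} (hs₀ : s₀ ∈ C) :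
    ∃ d ∈ Γ.pos, (∀ s ∈ C, Γ.LeftDvd d s) ∧
      ∀ c ∈ Γ.pos, (∀ s ∈ C, Γ.LeftDvd c s) → Γ.LeftDvd c d := by
  classical
  obtain ⟨N, hN⟩ := Γ.noetherian s₀ (hC hs₀)
  set D : Set G := {c | c ∈ Γ.pos ∧ ∀ s ∈ C, Γ.LeftDvd c s} with hD
  have h1D : (1 : G) ∈ D := ⟨Γ.pos.one_mem, fun s hs => Γ.one_ldvd' (hC hs)⟩
  set decs : G → Set ℕ := fun c =>
    {n | ∃ l : List G, (∀ x ∈ l, x ∈ Γ.pos ∧ x ≠ 1) ∧ l.prod = c ∧ l.length = n} with hdecs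
  have decs_ne : ∀ c ∈ Γ.pos, (decs c).Nonempty := by
    intro c hc
    by_cases h : c = 1
    · exact ⟨0, [], by simp, by simp [h], rfl⟩
    · refine ⟨1, [c], ?_, by simp, rfl⟩
      intro x hx
      rw [List.mem_singleton] at hx
      subst hx; exact ⟨hc, h⟩
  have decs_bdd : ∀ c ∈ D, ∀ n ∈ decs c, n ≤ N := by
    rintro c hc n ⟨l, hl, hlp, hln⟩
    by_cases h : c⁻¹ * s₀ = 1
    · have hcs : c = s₀ := inv_mul_eq_one.mp h
      exact hln ▸ hN l hl (hlp.trans hcs)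
    · have h2 := hN (l ++ [c⁻¹ * s₀]) ?_ ?_
      · simp [hln] at h2; omega
      · intro x hx
        rcases List.mem_append.mp hx with hx | hx
        · exact hl x hx
        · rw [List.mem_singleton] at hx
          subst hx; exact ⟨hc.2 s₀ hs₀, h⟩
      · rw [List.prod_append, List.prod_singleton, hlp, mul_inv_cancel_left]
  set μ : G → ℕ := fun c => sSup (decs c) with hμ
  have bddD : ∀ c ∈ D, BddAbove (decs c) := by
    intro c hc
    refine ⟨N, ?_⟩
    intro n hn
    exact decs_bdd c hc n hn
  have hμ_mem : ∀ c ∈ D, μ c ∈ decs c := fun c hc =>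
    Nat.sSup_mem (decs_ne c hc.1) (bddD c hc)
  have himg_ne : (μ '' D).Nonempty := ⟨μ 1, 1, h1D, rfl⟩
  have himg_bdd : BddAbove (μ '' D) := by
    refine ⟨N, ?_⟩
    rintro m ⟨c, hc, rfl⟩
    exact decs_bdd c hc _ (hμ_mem c hc)
  obtain ⟨d, hdD, hdμ⟩ := Nat.sSup_mem himg_ne himg_bdd
  refine ⟨d, hdD.1, hdD.2, ?_⟩
  intro c hc hcs
  have hcD : c ∈ D := ⟨hc, hcs⟩
  obtain ⟨m, hm, hcm, hdm, hmin⟩ := Γ.lcm_right c hc d hdD.1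
  have hmD : m ∈ D := ⟨hm, fun s hs => hmin s (hC hs) (hcD.2 s hs) (hdD.2 s hs)⟩
  by_cases hdm1 : d = m
  · unfold LeftDvd; rw [hdm1]; exact hcm
  · exfalso
    obtain ⟨l, hl, hlp, hln⟩ := hμ_mem d hdD
    have hmem : μ d + 1 ∈ decs m := by
      refine ⟨l ++ [d⁻¹ * m], ?_, ?_, by simp [hln]⟩
      · intro x hx
        rcases List.mem_append.mp hx with hx | hx
        · exact hl x hx
        · rw [List.mem_singleton] at hx
          subst hx
          exact ⟨hdm, fun h => hdm1 (inv_mul_eq_one.mp h)⟩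
      · rw [List.prod_append, List.prod_singleton, hlp, mul_inv_cancel_left]
    have h1 : μ d + 1 ≤ μ m := le_csSup (bddD m hmD) hmem
    have h2 : μ m ≤ μ d := by
      calc μ m ≤ sSup (μ '' D) := le_csSup himg_bdd ⟨m, hmD, rfl⟩
      _ = μ d := hdμ.symm
    omega

/-- The universal property of the positive gcd extends to arbitrary common
left divisors in `G`. -/
lemma ldvd_gcd_of_forall' (C : Set G) (hC : C ⊆ (Γ.pos : Set G)) {s₀ : G} (hs₀ : s₀ ∈ C)
    {d : G} (hd : d ∈ Γ.pos)
    (hduniv : ∀ c ∈ Γ.pos, (∀ s ∈ C, Γ.LeftDvd c s) → Γ.LeftDvd c d)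
    (c : G) (hc : ∀ s ∈ C, Γ.LeftDvd c s) : Γ.LeftDvd c d := by
  obtain ⟨a, ha, b, hb, hab⟩ := Γ.fractions c
  have hC'pos : (fun s => a * s) '' C ⊆ (Γ.pos : Set G) := by
    rintro _ ⟨s, hs, rfl⟩; exact Γ.pos.mul_mem ha (hC hs)
  obtain ⟨d', hd', hd'dvd, hd'univ⟩ :=
    Γ.exists_gcd_pos' ((fun s => a * s) '' C) hC'pos (Set.mem_image_of_mem _ hs₀)
  have hac : a * c ∈ Γ.pos := by rw [hab, mul_inv_cancel_left]; exact hb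
  have hacdvd : ∀ s' ∈ (fun s => a * s) '' C, Γ.LeftDvd (a * c) s' := by
    rintro _ ⟨s, hs, rfl⟩
    exact (Γ.ldvd_cancel' a).mpr (hc s hs)
  have h1 : Γ.LeftDvd (a * c) d' := hd'univ (a * c) hac hacdvd
  have hadvd : ∀ s' ∈ (fun s => a * s) '' C, Γ.LeftDvd a s' := by
    rintro _ ⟨s, hs, rfl⟩
    unfold LeftDvd
    rw [inv_mul_cancel_left]
    exact hC hs
  have h2 : Γ.LeftDvd a d' := hd'univ a ha hadvd
  have h3 : a⁻¹ * d' ∈ Γ.pos := h2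
  have h4 : ∀ s ∈ C, Γ.LeftDvd (a⁻¹ * d') s := by
    intro s hs
    have := hd'dvd _ (Set.mem_image_of_mem (fun s => a * s) hs)
    unfold LeftDvd at this ⊢
    have heq : (a⁻¹ * d')⁻¹ * s = d'⁻¹ * (a * s) := by group
    rw [heq]; exact this
  have h5 : Γ.LeftDvd (a⁻¹ * d') d := hduniv _ h3 h4
  have h6 : Γ.LeftDvd c (a⁻¹ * d') := by
    unfold LeftDvd at h1 ⊢
    have heq : c⁻¹ * (a⁻¹ * d') = (a * c)⁻¹ * d' := by group
    rw [heq]; exact h1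
  exact Γ.ldvd_trans' h6 h5

lemma conj_delta_mem' {x : G} (hx : x ∈ Γ.pos) : Γ.Δ⁻¹ * x * Γ.Δ ∈ Γ.pos := by
  rw [← Γ.simples_generate] at hx
  induction hx using Submonoid.closure_induction with
  | mem s hs =>
      obtain ⟨hsp, hsd⟩ := hs
      have hu : Γ.Δ * (s⁻¹ * Γ.Δ)⁻¹ ∈ Γ.pos := by
        have h : Γ.Δ * (s⁻¹ * Γ.Δ)⁻¹ = s := by group
        rw [h]; exact hsp
      have hres := (Γ.balanced (s⁻¹ * Γ.Δ) hsd).mpr hu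
      have h2 : (s⁻¹ * Γ.Δ)⁻¹ * Γ.Δ = Γ.Δ⁻¹ * s * Γ.Δ := by group
      rwa [h2] at hres
  | one =>
      have h : Γ.Δ⁻¹ * 1 * Γ.Δ = 1 := by group
      rw [h]; exact Γ.pos.one_mem
  | mul x y hxm hym ihx ihy =>
      have hmul := Γ.pos.mul_mem ihx ihy
      have h : (Γ.Δ⁻¹ * x * Γ.Δ) * (Γ.Δ⁻¹ * y * Γ.Δ) = Γ.Δ⁻¹ * (x * y) * Γ.Δ := by group
      rwa [h] at hmul

lemma conj_delta_inv_mem' {x : G} (hx : x ∈ Γ.pos) : Γ.Δ * x * Γ.Δ⁻¹ ∈ Γ.pos := by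
  rw [← Γ.simples_generate] at hx
  induction hx using Submonoid.closure_induction with
  | mem s hs =>
      obtain ⟨hsp, hsd⟩ := hs
      have hw : Γ.Δ * s⁻¹ ∈ Γ.pos := (Γ.balanced s hsp).mp hsd
      have hwd : (Γ.Δ * s⁻¹)⁻¹ * Γ.Δ ∈ Γ.pos := by
        have h : (Γ.Δ * s⁻¹)⁻¹ * Γ.Δ = s := by group
        rw [h]; exact hsp
      have hres := (Γ.balanced (Γ.Δ * s⁻¹) hw).mp hwd
      have h2 : Γ.Δ * (Γ.Δ * s⁻¹)⁻¹ = Γ.Δ * s * Γ.Δ⁻¹ := by group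
      rwa [h2] at hres
  | one =>
      have h : Γ.Δ * 1 * Γ.Δ⁻¹ = 1 := by group
      rw [h]; exact Γ.pos.one_mem
  | mul x y hxm hym ihx ihy =>
      have hmul := Γ.pos.mul_mem ihx ihy
      have h : (Γ.Δ * x * Γ.Δ⁻¹) * (Γ.Δ * y * Γ.Δ⁻¹) = Γ.Δ * (x * y) * Γ.Δ⁻¹ := by group
      rwa [h] at hmul

lemma tau_mem' (k : ℤ) {x : G} (hx : x ∈ Γ.pos) : Γ.Δ ^ (-k) * x * Γ.Δ ^ k ∈ Γ.pos := by
  induction k using Int.induction_on with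
  | zero => simpa using hx
  | succ n ih =>
      have hres := Γ.conj_delta_mem' ih
      have h : Γ.Δ⁻¹ * (Γ.Δ ^ (-(n : ℤ)) * x * Γ.Δ ^ (n : ℤ)) * Γ.Δ
          = Γ.Δ ^ (-((n : ℤ) + 1)) * x * Γ.Δ ^ ((n : ℤ) + 1) := by group
      rwa [h] at hres
  | pred n ih =>
      have hres := Γ.conj_delta_inv_mem' ih
      have h : Γ.Δ * (Γ.Δ ^ (-(-(n : ℤ))) * x * Γ.Δ ^ (-(n : ℤ))) * Γ.Δ⁻¹
          = Γ.Δ ^ (-(-(n : ℤ) - 1)) * x * Γ.Δ ^ (-(n : ℤ) - 1) := by group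
      rwa [h] at hres

lemma ldvd_mul_zpow' (k : ℤ) {a b : G} (h : Γ.LeftDvd a b) :
    Γ.LeftDvd (a * Γ.Δ ^ k) (b * Γ.Δ ^ k) := by
  unfold LeftDvd at *
  have heq : (a * Γ.Δ ^ k)⁻¹ * (b * Γ.Δ ^ k) = Γ.Δ ^ (-k) * (a⁻¹ * b) * Γ.Δ ^ k := by group
  rw [heq]; exact Γ.tau_mem' k h

/-- The key convexity lemma: if `d` is the positive gcd of a nonempty family `C`
of positive elements each of which conjugates `v` into `[p,q]`, then so does `d`. -/
lemma core_interval' (C : Set G) (hC : C ⊆ (Γ.pos : Set G)) {s₀ : G} (hs₀ : s₀ ∈ C)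
    {d : G} (hd : d ∈ Γ.pos) (hdvd : ∀ s ∈ C, Γ.LeftDvd d s)
    (huniv : ∀ c ∈ Γ.pos, (∀ s ∈ C, Γ.LeftDvd c s) → Γ.LeftDvd c d)
    {r : ℕ} (p q : Fin r → ℤ) (v : Fin r → G)
    (hint : ∀ s ∈ C, Γ.InInterval p q (fun i => s⁻¹ * v i * s)) :
    Γ.InInterval p q (fun i => d⁻¹ * v i * d) := by
  intro i
  constructor
  · show Γ.LeftDvd (Γ.Δ ^ (p i)) (d⁻¹ * v i * d)
    have key : ∀ s ∈ C, Γ.LeftDvd ((v i)⁻¹ * (d * Γ.Δ ^ (p i))) s := by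
      intro s hs
      have h1 : Γ.LeftDvd (d * Γ.Δ ^ (p i)) (s * Γ.Δ ^ (p i)) := Γ.ldvd_mul_zpow' _ (hdvd s hs)
      have h2 : Γ.LeftDvd (s * Γ.Δ ^ (p i)) (v i * s) := by
        have h3 : Γ.LeftDvd (Γ.Δ ^ (p i)) (s⁻¹ * v i * s) := (hint s hs i).1
        unfold LeftDvd at h3 ⊢
        have heq : (s * Γ.Δ ^ (p i))⁻¹ * (v i * s) = (Γ.Δ ^ (p i))⁻¹ * (s⁻¹ * v i * s) := by
          group
        rw [heq]; exact h3
      have h4 := Γ.ldvd_trans' h1 h2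
      unfold LeftDvd at h4 ⊢
      have heq : ((v i)⁻¹ * (d * Γ.Δ ^ (p i)))⁻¹ * s = (d * Γ.Δ ^ (p i))⁻¹ * (v i * s) := by
        group
      rw [heq]; exact h4
    have h5 := Γ.ldvd_gcd_of_forall' C hC hs₀ hd huniv _ key
    unfold LeftDvd at h5 ⊢
    have heq : (Γ.Δ ^ (p i))⁻¹ * (d⁻¹ * v i * d) = ((v i)⁻¹ * (d * Γ.Δ ^ (p i)))⁻¹ * d := by
      group
    rw [heq]; exact h5
  · show Γ.LeftDvd (d⁻¹ * v i * d) (Γ.Δ ^ (q i))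
    set k := q i with hk
    have hC'pos : (fun s => Γ.Δ ^ (-k) * s * Γ.Δ ^ k) '' C ⊆ (Γ.pos : Set G) := by
      rintro _ ⟨s, hs, rfl⟩; exact Γ.tau_mem' k (hC hs)
    have hs₀' : Γ.Δ ^ (-k) * s₀ * Γ.Δ ^ k ∈ (fun s => Γ.Δ ^ (-k) * s * Γ.Δ ^ k) '' C :=
      Set.mem_image_of_mem _ hs₀
    have hd' : Γ.Δ ^ (-k) * d * Γ.Δ ^ k ∈ Γ.pos := Γ.tau_mem' k hd
    have hd'univ : ∀ c ∈ Γ.pos,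
        (∀ s' ∈ (fun s => Γ.Δ ^ (-k) * s * Γ.Δ ^ k) '' C, Γ.LeftDvd c s') →
        Γ.LeftDvd c (Γ.Δ ^ (-k) * d * Γ.Δ ^ k) := by
      intro c hc hcs
      have hc0 : Γ.Δ ^ (-(-k)) * c * Γ.Δ ^ (-k) ∈ Γ.pos := Γ.tau_mem' (-k) hc
      have hc0dvd : ∀ s ∈ C, Γ.LeftDvd (Γ.Δ ^ (-(-k)) * c * Γ.Δ ^ (-k)) s := by
        intro s hs
        have h1 := hcs _ (Set.mem_image_of_mem (fun s => Γ.Δ ^ (-k) * s * Γ.Δ ^ k) hs)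
        unfold LeftDvd at h1 ⊢
        have heq : (Γ.Δ ^ (-(-k)) * c * Γ.Δ ^ (-k))⁻¹ * s
            = Γ.Δ ^ (-(-k)) * (c⁻¹ * (Γ.Δ ^ (-k) * s * Γ.Δ ^ k)) * Γ.Δ ^ (-k) := by group
        rw [heq]; exact Γ.tau_mem' (-k) h1
      have h2 := huniv _ hc0 hc0dvd
      unfold LeftDvd at h2 ⊢
      have heq : c⁻¹ * (Γ.Δ ^ (-k) * d * Γ.Δ ^ k)
          = Γ.Δ ^ (-k) * ((Γ.Δ ^ (-(-k)) * c * Γ.Δ ^ (-k))⁻¹ * d) * Γ.Δ ^ k := by group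
      rw [heq]; exact Γ.tau_mem' k h2
    have key : ∀ s' ∈ (fun s => Γ.Δ ^ (-k) * s * Γ.Δ ^ k) '' C,
        Γ.LeftDvd (Γ.Δ ^ (-k) * v i * d) s' := by
      rintro _ ⟨s, hs, rfl⟩
      have h1 : Γ.LeftDvd (v i * d) (v i * s) := (Γ.ldvd_cancel' (v i)).mpr (hdvd s hs)
      have h2 : Γ.LeftDvd (v i * s) (s * Γ.Δ ^ k) := by
        have h3 : Γ.LeftDvd (s⁻¹ * v i * s) (Γ.Δ ^ k) := (hint s hs i).2
        unfold LeftDvd at h3 ⊢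
        have heq : (v i * s)⁻¹ * (s * Γ.Δ ^ k) = (s⁻¹ * v i * s)⁻¹ * Γ.Δ ^ k := by group
        rw [heq]; exact h3
      have h4 := Γ.ldvd_trans' h1 h2
      unfold LeftDvd at h4 ⊢
      have heq : (Γ.Δ ^ (-k) * v i * d)⁻¹ * (Γ.Δ ^ (-k) * s * Γ.Δ ^ k)
          = (v i * d)⁻¹ * (s * Γ.Δ ^ k) := by group
      rw [heq]; exact h4
    have h5 := Γ.ldvd_gcd_of_forall' _ hC'pos hs₀' hd' hd'univ _ key
    unfold LeftDvd at h5 ⊢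
    have heq : (d⁻¹ * v i * d)⁻¹ * Γ.Δ ^ k
        = (Γ.Δ ^ (-k) * v i * d)⁻¹ * (Γ.Δ ^ (-k) * d * Γ.Δ ^ k) := by group
    rw [heq]; exact h5

end GarsideStructure
/-- The set `{s ∈ S : vˢ ∈ [p,q]}` is closed under greatest common left divisors;
consequently, for every atom `x`, if `{s ∈ S : x ≼ s and vˢ ∈ [p,q]}` is nonempty,
then it has a unique `≼`-minimal element. -/
theorem simple_conjugators_gcd_closed {G : Type*} [Group G] (Γ : GarsideStructure G)
    (r : ℕ) (p q : Fin r → ℤ) (v : Fin r → G) (hv : Γ.InInterval p q v) :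
    (∀ s t d : G,
      (Γ.Simple s ∧ Γ.InInterval p q (fun i => s⁻¹ * v i * s)) →
      (Γ.Simple t ∧ Γ.InInterval p q (fun i => t⁻¹ * v i * t)) →
      Γ.IsLeftGcd d s t →
      (Γ.Simple d ∧ Γ.InInterval p q (fun i => d⁻¹ * v i * d))) ∧
    (∀ x : G, Γ.Atom x →
      {s : G | Γ.Simple s ∧ Γ.LeftDvd x s ∧
        Γ.InInterval p q (fun i => s⁻¹ * v i * s)}.Nonempty →
      ∃! m : G,
        (Γ.Simple m ∧ Γ.LeftDvd x m ∧ Γ.InInterval p q (fun i => m⁻¹ * v i * m)) ∧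
        ∀ s : G, Γ.Simple s → Γ.LeftDvd x s →
          Γ.InInterval p q (fun i => s⁻¹ * v i * s) → Γ.LeftDvd s m → s = m) := by
  constructor
  · rintro s t d ⟨hs, hsint⟩ ⟨ht, htint⟩ ⟨hdpos, hds, hdt, hduniv⟩
    have hC : ({s, t} : Set G) ⊆ (Γ.pos : Set G) := by
      intro x hx
      simp only [Set.mem_insert_iff, Set.mem_singleton_iff] at hx
      rcases hx with rfl | rfl
      · exact hs.1
      · exact ht.1
    have hdvd : ∀ x ∈ ({s, t} : Set G), Γ.LeftDvd d x := by
      intro x hx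
      simp only [Set.mem_insert_iff, Set.mem_singleton_iff] at hx
      rcases hx with rfl | rfl
      · exact hds
      · exact hdt
    have huniv : ∀ c ∈ Γ.pos, (∀ x ∈ ({s, t} : Set G), Γ.LeftDvd c x) → Γ.LeftDvd c d := by
      intro c hc h
      exact hduniv c hc (h s (Set.mem_insert _ _)) (h t (Set.mem_insert_of_mem _ rfl))
    have hint : ∀ x ∈ ({s, t} : Set G), Γ.InInterval p q (fun i => x⁻¹ * v i * x) := by
      intro x hx
      simp only [Set.mem_insert_iff, Set.mem_singleton_iff] at hx
      rcases hx with rfl | rfl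
      · exact hsint
      · exact htint
    exact ⟨⟨hdpos, Γ.ldvd_trans' hds hs.2⟩,
      Γ.core_interval' {s, t} hC (Set.mem_insert s _) hdpos hdvd huniv p q v hint⟩
  · intro x hx hne
    obtain ⟨s₀, hs₀⟩ := hne
    have hC : {s : G | Γ.Simple s ∧ Γ.LeftDvd x s ∧
        Γ.InInterval p q (fun i => s⁻¹ * v i * s)} ⊆ (Γ.pos : Set G) := fun s hs => hs.1.1
    obtain ⟨d, hdpos, hdvd, huniv⟩ := Γ.exists_gcd_pos' _ hC hs₀
    have hdx : Γ.LeftDvd x d := huniv x hx.1 (fun s hs => hs.2.1)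
    have hdint := Γ.core_interval' _ hC hs₀ hdpos hdvd huniv p q v (fun s hs => hs.2.2)
    have hdsimple : Γ.Simple d := ⟨hdpos, Γ.ldvd_trans' (hdvd s₀ hs₀) hs₀.1.2⟩
    refine ⟨d, ⟨⟨hdsimple, hdx, hdint⟩, ?_⟩, ?_⟩
    · intro s hss hxs hsint hsd
      exact Γ.ldvd_antisymm' hsd (hdvd s ⟨hss, hxs, hsint⟩)
    · rintro m ⟨⟨hmsimple, hxm, hmint⟩, hmin⟩
      exact (hmin d hdsimple hdx hdint (hdvd m ⟨hmsimple, hxm, hmint⟩)).symm
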